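/- In the free product F = (ℤ/3ℤ) ∗ (ℤ/2ℤ), let a be the image of a generator of ℤ/3ℤ and b the image of the generator of ℤ/2ℤ. Then for every integer c with c ∉ {1, 2, 3}, the element (a⁻¹b)^c · (b a⁻¹) (where the exponent c is an integer power, possibly negative or zero) is not a proper power: there is no g ∈ F and no integer n ≥ 2 with gⁿ = (a⁻¹b)^c(ba⁻¹). -/

import Mathlib

open Monoid Multiplicative

namespace NPP

abbrev F : Type := Monoid.Coprod (Multiplicative (ZMod 3)) (Multiplicative (ZMod 2))

abbrev Z3 := ZMod 3
abbrev X : Type := Z3 × List Z3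

def gl (l : List Z3) : Z3 := l.getLastD 0

def Valid (l : List Z3) : Prop := ∀ x ∈ l.dropLast, x ≠ 0

def laF (v : Z3) : X → X := fun p => (v + p.1, p.2)

def lbF : X → X := fun p =>
  if p.1 = 0 then
    match p.2 with
    | [] => (0, [0])
    | q :: t => if q = 0 then (if t.isEmpty then (0, []) else (0, q :: t)) else (q, t)
  else (0, p.1 :: p.2)

lemma laF_zero : laF 0 = id := by funext p; simp [laF]

lemma laF_add (u v : Z3) : laF (u + v) = laF u ∘ laF v := by
  funext p; simp [laF, add_assoc]

lemma lbF_invol : lbF ∘ lbF = id := by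
  funext p
  obtain ⟨x, t⟩ := p
  by_cases hx : x = 0
  · subst hx
    match t with
    | [] => simp [lbF]
    | q :: t =>
      by_cases hq : q = 0
      · subst hq
        match t with
        | [] => simp [lbF]
        | r :: t => simp [lbF]
      · simp [lbF, hq]
  · simp [lbF, hx]

lemma lbF_pair_b : lbF (0, [(0 : Z3)]) = (0, []) := by simp [lbF]

section Machine

variable (a₀ : Multiplicative (ZMod 3))

/-- left multiplication by `a₀^(x.val)` -/
def apow (x : Z3) : F := Monoid.Coprod.inl (a₀ ^ x.val)

def bF : F := Monoid.Coprod.inr (ofAdd (1 : ZMod 2))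

lemma a0_cube : a₀ ^ 3 = 1 := by
  have : ∀ x : Multiplicative (ZMod 3), x ^ 3 = 1 := by decide
  exact this a₀

lemma a0_pow_mod (m : ℕ) : a₀ ^ m = a₀ ^ (m % 3) := by
  conv_lhs => rw [← Nat.div_add_mod m 3]
  rw [pow_add, pow_mul, a0_cube, one_pow, one_mul]

lemma a0_pow_congr {m n : ℕ} (h : m % 3 = n % 3) : a₀ ^ m = a₀ ^ n := by
  rw [a0_pow_mod a₀ m, a0_pow_mod a₀ n, h]

lemma apow_add (x y : Z3) : apow a₀ (x + y) = apow a₀ x * apow a₀ y := by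
  unfold apow
  rw [← MonoidHom.map_mul, ← pow_add]
  congr 1
  exact a0_pow_congr a₀ (by rw [ZMod.val_add]; simp [Nat.mod_mod_of_dvd])

lemma apow_zero : apow a₀ 0 = 1 := by
  unfold apow; simp [ZMod.val_zero]

lemma apow_neg (x : Z3) : apow a₀ (-x) = (apow a₀ x)⁻¹ := by
  rw [eq_inv_iff_mul_eq_one, ← apow_add, neg_add_cancel, apow_zero]

lemma bF_sq : bF * bF = 1 := by
  unfold bF
  rw [← MonoidHom.map_mul]
  have : (ofAdd (1 : ZMod 2)) * (ofAdd (1 : ZMod 2)) = 1 := by decide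
  rw [this, MonoidHom.map_one]

lemma bF_inv : bF⁻¹ = bF := by
  rw [eq_comm, eq_inv_iff_mul_eq_one, bF_sq]

def ρa : Multiplicative (ZMod 3) →* Function.End X where
  toFun m := laF (toAdd a₀ * toAdd m)
  map_one' := by simp [laF_zero]; rfl
  map_mul' m n := by
    show laF _ = (laF (toAdd a₀ * toAdd m) ∘ laF (toAdd a₀ * toAdd n) : X → X)
    rw [← laF_add, toAdd_mul, mul_add]

def ρb : Multiplicative (ZMod 2) →* Function.End X where
  toFun m := if toAdd m = 0 then 1 else lbF
  map_one' := by simp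
  map_mul' m n := by
    have h2 : ∀ u : ZMod 2, u = 0 ∨ u = 1 := by decide
    rcases h2 (toAdd m) with hm | hm <;> rcases h2 (toAdd n) with hn | hn <;>
      simp [toAdd_mul, hm, hn]
    · rfl
    · rfl
    · exact (if_pos (by decide : (1 + 1 : ZMod 2) = 0)).trans (lbF_invol).symm

def Phi : F →* Function.End X := Monoid.Coprod.lift (ρa a₀) (ρb)

def nf (g : F) : X := Phi a₀ g (0, [])

end Machine


section Lists

lemma gl_concat (l : List Z3) (x : Z3) : gl (l ++ [x]) = x := by
  induction l with
  | nil => rfl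
  | cons q t ih => simpa [gl, List.getLastD] using ih

lemma gl_cons (q : Z3) {t : List Z3} (h : t ≠ []) : gl (q :: t) = gl t := by
  cases t with
  | nil => exact absurd rfl h
  | cons r t' => simp [gl, List.getLastD]

lemma gl_append {t : List Z3} (l : List Z3) (h : t ≠ []) : gl (l ++ t) = gl t := by
  induction l with
  | nil => rfl
  | cons q l' ih => rw [List.cons_append, gl_cons _ (by simp [h]), ih]

lemma gl_eq_getLast {l : List Z3} (h : l ≠ []) : gl l = l.getLast h := by
  induction l with
  | nil => exact absurd rfl h
  | cons q t ih =>
    cases t with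
    | nil => rfl
    | cons r t' => rw [gl_cons _ (by simp), List.getLast_cons (by simp)]; exact ih (by simp)

lemma decomp {l : List Z3} (h : l ≠ []) : l.dropLast ++ [gl l] = l := by
  rw [gl_eq_getLast h]; exact List.dropLast_append_getLast h

lemma dropLast_cons {t : List Z3} (q : Z3) (h : t ≠ []) :
    (q :: t).dropLast = q :: t.dropLast := by
  cases t with
  | nil => exact absurd rfl h
  | cons r t' => rfl

lemma dropLast_append {t : List Z3} (l : List Z3) (h : t ≠ []) :
    (l ++ t).dropLast = l ++ t.dropLast := by
  induction l with
  | nil => rfl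
  | cons q l' ih => rw [List.cons_append, dropLast_cons _ (by simp [h]), ih, List.cons_append]

lemma valid_nil : Valid [] := by intro x hx; simp at hx

lemma valid_single (q : Z3) : Valid [q] := by intro x hx; simp [List.dropLast] at hx

lemma valid_cons {q : Z3} {t : List Z3} (hq : q ≠ 0) (hv : Valid t) : Valid (q :: t) := by
  intro x hx
  cases t with
  | nil => simp [List.dropLast] at hx
  | cons r t' =>
    rw [dropLast_cons _ (by simp)] at hx
    rcases List.mem_cons.1 hx with rfl | hx
    · exact hq
    · exact hv x hx

lemma valid_of_cons {q : Z3} {t : List Z3} (hv : Valid (q :: t)) : Valid t := by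
  intro x hx
  cases t with
  | nil => simp at hx
  | cons r t' =>
    exact hv x (by rw [dropLast_cons _ (by simp)]; exact List.mem_cons_of_mem _ hx)

lemma head_ne_of_valid {q : Z3} {t : List Z3} (hv : Valid (q :: t)) (ht : t ≠ []) : q ≠ 0 := by
  apply hv
  rw [dropLast_cons _ ht]
  exact List.mem_cons_self

lemma valid_concat {l : List Z3} (h : ∀ x ∈ l, x ≠ 0) (x0 : Z3) : Valid (l ++ [x0]) := by
  intro x hx
  rw [List.dropLast_concat] at hx
  exact h x hx

lemma valid_dropLast {l : List Z3} (hv : Valid l) : Valid l.dropLast :=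
  fun x hx => hv x (List.Sublist.mem hx (List.dropLast_sublist _))

end Lists

section Machine2

variable (a₀ : Multiplicative (ZMod 3))

def prodT : List Z3 → F
  | [] => 1
  | q :: t => bF * (apow a₀ q * prodT t)

def toF (z : Z3) (t : List Z3) : F := apow a₀ z * prodT a₀ t

lemma toF_nil (z : Z3) : toF a₀ z [] = apow a₀ z := by
  simp [toF, prodT]

lemma toF_cons (z q : Z3) (t : List Z3) :
    toF a₀ z (q :: t) = apow a₀ z * (bF * toF a₀ q t) := by
  simp [toF, prodT, mul_assoc]

lemma prodT_concat (l : List Z3) (x : Z3) :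
    prodT a₀ (l ++ [x]) = prodT a₀ l * (bF * apow a₀ x) := by
  induction l with
  | nil => simp [prodT, mul_assoc]
  | cons q t ih => simp [prodT, ih, mul_assoc]

lemma toF_concat (z : Z3) (l : List Z3) (x : Z3) :
    toF a₀ z (l ++ [x]) = toF a₀ z l * (bF * apow a₀ x) := by
  simp [toF, prodT_concat, mul_assoc]

lemma bF_bF_cancel (x : F) : bF * (bF * x) = x := by
  rw [← mul_assoc, bF_sq, one_mul]


lemma val_cast (x : Z3) : ((x.val : ℕ) : Z3) = x := ZMod.natCast_rightInverse x

lemma Phi_apow (hT : toAdd a₀ * toAdd a₀ = 1) (x : Z3) (p : X) : Phi a₀ (apow a₀ x) p = laF x p := by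
  unfold Phi apow
  rw [Monoid.Coprod.lift_apply_inl]
  show laF (toAdd a₀ * toAdd (a₀ ^ x.val)) p = laF x p
  congr 1
  rw [toAdd_pow, nsmul_eq_mul, val_cast]
  calc toAdd a₀ * (x * toAdd a₀) = x * (toAdd a₀ * toAdd a₀) := by ring
  _ = x := by rw [hT, mul_one]

lemma Phi_b (p : X) : Phi a₀ bF p = lbF p := by
  unfold Phi bF
  rw [Monoid.Coprod.lift_apply_inr]
  show (if toAdd (ofAdd (1 : ZMod 2)) = 0 then (1 : Function.End X) else lbF) p = lbF p
  exact congrArg (fun f : Function.End X => f p) (if_neg (by decide))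

lemma Phi_inr_one (m : Multiplicative (ZMod 2)) (hm : toAdd m = 0) (x : X) :
    Phi a₀ (Monoid.Coprod.inr m) x = x := by
  unfold Phi
  rw [Monoid.Coprod.lift_apply_inr]
  show ((if toAdd m = 0 then (1 : Function.End X) else lbF)) x = x
  refine (congrArg (fun f : Function.End X => f x) (if_pos hm)).trans ?_
  rfl

lemma Phi_inr_b (m : Multiplicative (ZMod 2)) (hm : toAdd m ≠ 0) (x : X) :
    Phi a₀ (Monoid.Coprod.inr m) x = lbF x := by
  unfold Phi
  rw [Monoid.Coprod.lift_apply_inr]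
  show ((if toAdd m = 0 then (1 : Function.End X) else lbF)) x = lbF x
  exact congrArg (fun f : Function.End X => f x) (if_neg hm)

lemma Phi_mul_apply (g h : F) (x : X) : Phi a₀ (g * h) x = Phi a₀ g (Phi a₀ h x) := by
  rw [map_mul]; rfl

lemma nf_mul (g k : F) : nf a₀ (g * k) = Phi a₀ g (nf a₀ k) := Phi_mul_apply a₀ g k _

end Machine2



section Machine3

variable (a₀ : Multiplicative (ZMod 3))

lemma apow_toAdd (hT : toAdd a₀ * toAdd a₀ = 1) (m : Multiplicative (ZMod 3)) :
    apow a₀ (toAdd a₀ * toAdd m) = Monoid.Coprod.inl m := by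
  unfold apow
  congr 1
  apply Multiplicative.toAdd.injective
  rw [toAdd_pow, nsmul_eq_mul, val_cast]
  calc toAdd a₀ * toAdd m * toAdd a₀ = toAdd m * (toAdd a₀ * toAdd a₀) := by ring
  _ = toAdd m := by rw [hT, mul_one]

lemma Phi_inl_apply (m : Multiplicative (ZMod 3)) (x : X) :
    Phi a₀ (Monoid.Coprod.inl m) x = laF (toAdd a₀ * toAdd m) x := by
  unfold Phi
  rw [Monoid.Coprod.lift_apply_inl]
  rfl

lemma prepend (hT : toAdd a₀ * toAdd a₀ = 1) :
    ∀ (t : List Z3) (z κ : Z3) (ks : List Z3), Valid t → t ≠ [] → gl t + κ ≠ 0 →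
    Phi a₀ (toF a₀ z t) (κ, ks) = (z, t.dropLast ++ (gl t + κ) :: ks) := by
  intro t
  induction t with
  | nil => intro z κ ks _ h; exact absurd rfl h
  | cons q t₂ ih =>
    intro z κ ks hv _ hgl
    cases t₂ with
    | nil =>
      have hgl' : q + κ ≠ 0 := by simpa [gl] using hgl
      rw [toF_cons, Phi_mul_apply, Phi_mul_apply, Phi_apow a₀ hT, toF_nil, Phi_apow a₀ hT,
        Phi_b]
      simp [laF, lbF, hgl', gl, List.getLastD]
    | cons r t₃ =>
      have ht₂ : (r :: t₃) ≠ [] := by simp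
      have hq : q ≠ 0 := head_ne_of_valid hv ht₂
      have hglc : gl (q :: r :: t₃) = gl (r :: t₃) := gl_cons _ ht₂
      rw [hglc] at hgl
      rw [toF_cons, Phi_mul_apply, Phi_mul_apply, Phi_apow a₀ hT, Phi_b,
        ih q κ ks (valid_of_cons hv) ht₂ hgl, dropLast_cons _ ht₂, hglc]
      simp [lbF, hq, laF]

lemma nf_toF_explicit (hT : toAdd a₀ * toAdd a₀ = 1) :
    ∀ (t : List Z3) (z : Z3), Valid t → nf a₀ (toF a₀ z t) = (z, t) := by
  intro t
  induction t with
  | nil =>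
    intro z _
    rw [toF_nil]
    show Phi a₀ _ _ = _
    rw [Phi_apow a₀ hT]
    simp [laF]
  | cons q t₂ ih =>
    intro z hv
    cases t₂ with
    | nil =>
      show Phi a₀ _ _ = _
      rw [toF_cons, Phi_mul_apply, Phi_mul_apply, Phi_apow a₀ hT, toF_nil, Phi_apow a₀ hT, Phi_b]
      by_cases hq : q = 0
      · subst hq; simp [laF, lbF]
      · simp [laF, lbF, hq]
    | cons r t₃ =>
      have ht₂ : (r :: t₃) ≠ [] := by simp
      have hq : q ≠ 0 := head_ne_of_valid hv ht₂
      show Phi a₀ _ _ = _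
      rw [toF_cons, Phi_mul_apply, Phi_mul_apply, Phi_apow a₀ hT, Phi_b]
      have hih : (Phi a₀) (toF a₀ q (r :: t₃)) (0, []) = (q, r :: t₃) :=
        ih q (valid_of_cons hv)
      rw [hih]
      simp [laF, lbF, hq]

lemma Phi_valid : ∀ (g : F) (x : X), Valid x.2 → Valid (Phi a₀ g x).2 := by
  intro g
  induction g using Monoid.Coprod.induction_on with
  | inl m =>
    intro x hx
    rw [Phi_inl_apply]
    exact hx
  | inr m =>
    intro x hx
    by_cases hm : toAdd m = 0
    · rw [Phi_inr_one a₀ m hm]; exact hx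
    · rw [Phi_inr_b a₀ m hm]
      obtain ⟨x1, t⟩ := x
      by_cases hx1 : x1 = 0
      · subst hx1
        cases t with
        | nil => simpa [lbF] using valid_single 0
        | cons q t' =>
          by_cases hq : q = 0
          · subst hq
            cases t' with
            | nil => simpa [lbF] using valid_nil
            | cons u t'' => simpa [lbF] using hx
          · simp only [lbF, if_pos rfl, if_neg hq]
            exact valid_of_cons hx
      · simp only [lbF, if_neg hx1]
        exact valid_cons hx1 hx
  | mul x y hx hy =>
    intro p hp
    rw [Phi_mul_apply]
    exact hx _ (hy _ hp)

lemma nf_valid (g : F) : Valid (nf a₀ g).2 := Phi_valid a₀ g (0, []) valid_nil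

lemma toF_mul_aux (hT : toAdd a₀ * toAdd a₀ = 1) :
    ∀ (g : F) (x : X), Valid x.2 →
      toF a₀ (Phi a₀ g x).1 (Phi a₀ g x).2 = g * toF a₀ x.1 x.2 := by
  intro g
  induction g using Monoid.Coprod.induction_on with
  | inl m =>
    intro x _
    rw [Phi_inl_apply]
    obtain ⟨x1, t⟩ := x
    show toF a₀ (toAdd a₀ * toAdd m + x1) t = _
    rw [toF, apow_add, mul_assoc, ← toF, apow_toAdd a₀ hT]
  | inr m =>
    intro x hx
    have h2 : ∀ u : ZMod 2, u = 0 ∨ u = 1 := by decide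
    rcases h2 (toAdd m) with hm | hm
    · have hm1 : m = 1 := Multiplicative.toAdd.injective hm
      rw [Phi_inr_one a₀ m hm, hm1, map_one, one_mul]
    · have hm1 : m = ofAdd 1 := Multiplicative.toAdd.injective hm
      have hbm : Monoid.Coprod.inr m = bF := by rw [hm1]; rfl
      have hmne : toAdd m ≠ 0 := by rw [hm]; decide
      rw [Phi_inr_b a₀ m hmne, hbm]
      obtain ⟨x1, t⟩ := x
      by_cases hx1 : x1 = 0
      · subst hx1
        cases t with
        | nil =>
          show toF a₀ (lbF (0, [])).1 (lbF (0, [])).2 = bF * toF a₀ (0, ([] : List Z3)).1 (0, ([] : List Z3)).2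
          simp only [lbF, if_pos rfl]
          simp [toF, prodT, apow_zero]
        | cons q t' =>
          by_cases hq : q = 0
          · subst hq
            have ht' : t' = [] := by
              by_contra h
              exact (head_ne_of_valid hx h) rfl
            subst ht'
            simp only [lbF, if_pos rfl, List.isEmpty_nil]
            show toF a₀ 0 [] = bF * toF a₀ 0 [0]
            simp [toF, prodT, apow_zero, ← mul_assoc, bF_sq]
          · simp only [lbF, if_pos rfl, if_neg hq]
            show toF a₀ q t' = bF * toF a₀ 0 (q :: t')
            rw [toF_cons, apow_zero, one_mul, bF_bF_cancel]
      · simp only [lbF, if_neg hx1]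
        show toF a₀ 0 (x1 :: t) = bF * toF a₀ x1 t
        rw [toF_cons, apow_zero, one_mul]
  | mul x y hx hy =>
    intro p hp
    rw [Phi_mul_apply, hx _ (Phi_valid a₀ y p hp), hy _ hp, mul_assoc]

lemma toF_nf (hT : toAdd a₀ * toAdd a₀ = 1) (g : F) :
    toF a₀ (nf a₀ g).1 (nf a₀ g).2 = g := by
  have h := toF_mul_aux a₀ hT g (0, []) valid_nil
  show toF a₀ ((Phi a₀) g (0, [])).1 ((Phi a₀) g (0, [])).2 = g
  rw [h]
  show g * (apow a₀ 0 * 1) = g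
  rw [apow_zero, one_mul, mul_one]

lemma toF_inj (hT : toAdd a₀ * toAdd a₀ = 1) {z t z' t'} (hv : Valid t) (hv' : Valid t')
    (h : toF a₀ z t = toF a₀ z' t') : z = z' ∧ t = t' := by
  have h1 := nf_toF_explicit a₀ hT t z hv
  have h2 := nf_toF_explicit a₀ hT t' z' hv'
  rw [h] at h1
  have h3 := h1.symm.trans h2
  exact Prod.ext_iff.mp h3

lemma toF_inv (ρ : Z3) : ∀ (r : List Z3) (z : Z3),
    (toF a₀ z (r ++ [ρ]))⁻¹ = toF a₀ (-ρ) ((r.reverse.map (fun x => -x)) ++ [-z]) := by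
  intro r
  induction r with
  | nil =>
    intro z
    show (apow a₀ z * (bF * (apow a₀ ρ * 1)))⁻¹ = apow a₀ (-ρ) * (bF * (apow a₀ (-z) * 1))
    rw [mul_one, mul_one, mul_inv_rev, mul_inv_rev, apow_neg, apow_neg, bF_inv, mul_assoc]
  | cons q r' ih =>
    intro z
    rw [List.cons_append, toF_cons, mul_inv_rev, mul_inv_rev, ih q, bF_inv, ← apow_neg,
      mul_assoc, ← toF_concat]
    simp

end Machine3


section Machine4

variable (a₀ : Multiplicative (ZMod 3))

lemma apow_mul_toF (i y : Z3) (t : List Z3) :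
    apow a₀ i * toF a₀ y t = toF a₀ (y + i) t := by
  rw [toF, toF, ← mul_assoc, ← apow_add, add_comm i y]

lemma b_mul_toF (z : Z3) (t : List Z3) : bF * toF a₀ z t = toF a₀ 0 (z :: t) := by
  rw [toF_cons, apow_zero, one_mul]

lemma b_mul_toF0 (d : Z3) (t₂ : List Z3) : bF * toF a₀ 0 (d :: t₂) = toF a₀ d t₂ := by
  rw [← b_mul_toF, bF_bF_cancel]

lemma apow_six (z : Z3) : apow a₀ z ^ 6 = 1 := by
  have h3 : apow a₀ z ^ 3 = 1 := by
    have : z + (z + z) = 3 * z := by ring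
    have h0 : (3 : Z3) * z = 0 := by
      have : (3 : Z3) = 0 := by decide
      rw [this, zero_mul]
    rw [pow_succ, pow_two, mul_assoc, ← apow_add, ← apow_add, this, h0, apow_zero]
  rw [show (6 : ℕ) = 3 * 2 from rfl, pow_mul, h3, one_pow]

lemma bF_six : bF ^ 6 = 1 := by
  have h2 : bF ^ 2 = 1 := by rw [pow_two, bF_sq]
  rw [show (6 : ℕ) = 2 * 3 from rfl, pow_mul, h2, one_pow]

/-- the cyclic exponent sequence -/
def cycL (y : Z3) (s : List Z3) : List Z3 := (y + gl s) :: s.dropLast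

def repL (p : List Z3) : ℕ → List Z3
  | 0 => []
  | n + 1 => p ++ repL p n

lemma repL_mem {p : List Z3} {k : ℕ} {x : Z3} (hx : x ∈ repL p k) : x ∈ p := by
  induction k with
  | zero => simp [repL] at hx
  | succ n ih =>
    rcases List.mem_append.1 hx with h | h
    · exact h
    · exact ih h

lemma repL_count (p : List Z3) (v : Z3) : ∀ k, (repL p k).count v = k * p.count v := by
  intro k
  induction k with
  | zero => simp [repL]
  | succ n ih => rw [repL, List.count_append, ih]; ring

def patL (y : Z3) (s : List Z3) : List Z3 := s.dropLast ++ [gl s + y]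

lemma nf_pow (hT : toAdd a₀ * toAdd a₀ = 1) {y : Z3} {s : List Z3}
    (hv : Valid s) (hne : s ≠ []) (hcyc : y + gl s ≠ 0) :
    ∀ k : ℕ, nf a₀ (toF a₀ y s ^ (k + 1)) = (y, repL (patL y s) k ++ s) := by
  intro k
  induction k with
  | zero => rw [pow_one]; exact nf_toF_explicit a₀ hT s y hv
  | succ n ih =>
    rw [pow_succ', nf_mul, ih,
      prepend a₀ hT s y y (repL (patL y s) n ++ s) hv hne (by rw [add_comm]; exact hcyc)]
    show _ = (y, (patL y s ++ repL (patL y s) n) ++ s)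
    rw [patL, List.append_assoc, List.append_assoc]
    rfl

lemma toF_pow (hT : toAdd a₀ * toAdd a₀ = 1) {y : Z3} {s : List Z3}
    (hv : Valid s) (hne : s ≠ []) (hcyc : y + gl s ≠ 0) (k : ℕ) :
    toF a₀ y s ^ (k + 1) = toF a₀ y (repL (patL y s) k ++ s) := by
  have h := nf_pow a₀ hT hv hne hcyc k
  have h2 := toF_nf a₀ hT (toF a₀ y s ^ (k + 1))
  rw [h] at h2
  exact h2.symm

lemma valid_pow {y : Z3} {s : List Z3} (hv : Valid s) (hne : s ≠ []) (hcyc : y + gl s ≠ 0)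
    (k : ℕ) : Valid (repL (patL y s) k ++ s) := by
  intro x hx
  rw [dropLast_append _ hne] at hx
  rcases List.mem_append.1 hx with h | h
  · have := repL_mem h
    rcases List.mem_append.1 this with h' | h'
    · exact hv x h'
    · rcases List.mem_singleton.1 h' with rfl
      rw [add_comm]
      exact hcyc
  · exact hv x h

lemma gl_pow {s : List Z3} (hne : s ≠ []) (p : List Z3) (k : ℕ) :
    gl (repL p k ++ s) = gl s := gl_append _ hne

lemma count_cycL_pow {y : Z3} {s : List Z3} (hne : s ≠ []) (k : ℕ) (v : Z3) :
    (cycL y (repL (patL y s) k ++ s)).count v = (k + 1) * (cycL y s).count v := by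
  rw [cycL, cycL, gl_append _ hne, dropLast_append _ hne]
  have hcomm : gl s + y = y + gl s := add_comm _ _
  by_cases hv2 : y + gl s = v
  · simp [List.count_cons, List.count_append, repL_count, patL, hcomm, hv2]
    ring
  · simp [List.count_cons, List.count_append, repL_count, patL, hcomm, hv2]
    ring

lemma cycred (hT : toAdd a₀ * toAdd a₀ = 1) :
    ∀ (g : F), ∃ (h u : F), g = h * u * h⁻¹ ∧
      (u ^ 6 = 1 ∨ ∃ y s, u = toF a₀ y s ∧ Valid s ∧ s ≠ [] ∧ y + gl s ≠ 0) := by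
  suffices H : ∀ (N : ℕ) (g : F), (nf a₀ g).2.length ≤ N → ∃ (h u : F), g = h * u * h⁻¹ ∧
      (u ^ 6 = 1 ∨ ∃ y s, u = toF a₀ y s ∧ Valid s ∧ s ≠ [] ∧ y + gl s ≠ 0) by
    exact fun g => H (nf a₀ g).2.length g le_rfl
  intro N
  induction N with
  | zero =>
    intro g hlen
    have hnil : (nf a₀ g).2 = [] := List.length_eq_zero_iff.1 (Nat.le_zero.1 hlen)
    have hg := toF_nf a₀ hT g
    rw [hnil, toF_nil] at hg
    refine ⟨1, g, by simp, Or.inl ?_⟩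
    rw [← hg]
    exact apow_six a₀ _
  | succ N IH =>
    intro g hlen
    set z := (nf a₀ g).1 with hz
    have hg := toF_nf a₀ hT g
    have hvr : Valid (nf a₀ g).2 := nf_valid a₀ g
    rcases hr : (nf a₀ g).2 with _ | ⟨q, t₂⟩
    · -- empty: torsion
      rw [hr, toF_nil] at hg
      refine ⟨1, g, by simp, Or.inl ?_⟩
      rw [← hg]
      exact apow_six a₀ _
    · rw [hr] at hg hvr
      by_cases hcyc : z + gl (q :: t₂) ≠ 0
      · exact ⟨1, g, by simp, Or.inr ⟨z, q :: t₂, by rw [← hg], hvr, by simp, hcyc⟩⟩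
      · push_neg at hcyc
        cases t₂ with
        | nil =>
          -- g = apow z * bF * apow (-z), conjugate of bF
          have hq : q = -z := by
            have : z + q = 0 := by simpa [gl, List.getLastD] using hcyc
            linear_combination this
          refine ⟨apow a₀ z, bF, ?_, Or.inl bF_six⟩
          rw [← hg, hq, toF_cons, toF_nil, ← apow_neg, mul_assoc]
        | cons r t₃ =>
          have ht₂ : (r :: t₃) ≠ [] := by simp
          have hglq : gl (q :: r :: t₃) = gl (r :: t₃) := gl_cons _ ht₂
          have hgl : gl (r :: t₃) = -z := by
            rw [hglq] at hcyc
            linear_combination hcyc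
          have hvt : Valid (r :: t₃) := valid_of_cons hvr
          have hvd : Valid (r :: t₃).dropLast := by
            intro x hx
            exact hvt x (List.Sublist.mem hx (List.dropLast_sublist _))
          -- g = (apow z * bF) * toF q dL * (apow z * bF)⁻¹
          have hid : g = (apow a₀ z * bF) * toF a₀ q (r :: t₃).dropLast *
              (apow a₀ z * bF)⁻¹ := by
            rw [← hg, toF_cons]
            conv_lhs => rw [← decomp ht₂, hgl, toF_concat]
            rw [mul_inv_rev, bF_inv, ← apow_neg]
            simp [mul_assoc]
            rfl
          have hlen2 : (nf a₀ (toF a₀ q (r :: t₃).dropLast)).2.length ≤ N := by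
            rw [nf_toF_explicit a₀ hT _ q hvd]
            have : (r :: t₃).dropLast.length < (r :: t₃).length := by
              rw [List.length_dropLast]
              simp
            have hle : (q :: r :: t₃).length ≤ N + 1 := by rw [← hr]; exact hlen
            simp only [List.length_cons] at this hle ⊢
            omega
          obtain ⟨h', u, hgu, hu⟩ := IH (toF a₀ q (r :: t₃).dropLast) hlen2
          refine ⟨(apow a₀ z * bF) * h', u, ?_, hu⟩
          rw [hid, hgu]
          simp [mul_assoc, mul_inv_rev]

end Machine4


section Machine5

variable (a₀ : Multiplicative (ZMod 3))

lemma toF_b : toF a₀ 0 [0] = bF := by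
  simp [toF, prodT, apow_zero]

lemma conj_conj (ξ P U : F) : ξ * (P * U * P⁻¹) * ξ⁻¹ = (ξ * P) * U * (ξ * P)⁻¹ := by
  simp [mul_inv_rev, mul_assoc]

lemma aconj (i y : Z3) {s : List Z3} (hne : s ≠ []) :
    apow a₀ i * toF a₀ y s * (apow a₀ i)⁻¹ = toF a₀ (y + i) (s.dropLast ++ [gl s - i]) := by
  conv_lhs => rw [← decomp hne, toF_concat]
  rw [toF_concat, ← apow_neg, ← apow_mul_toF, sub_eq_add_neg, apow_add]
  simp [mul_assoc]

lemma cycL_aconj (y i : Z3) (s : List Z3) :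
    cycL (y + i) (s.dropLast ++ [gl s - i]) = cycL y s := by
  rw [cycL, cycL, gl_concat, List.dropLast_concat]
  congr 1
  ring

lemma perm_rot (y γ : Z3) (d : List Z3) : (γ :: y :: d).Perm (y :: (d ++ [γ])) := by
  have h1 : (d ++ [γ]).Perm (γ :: d) := List.perm_append_singleton _ _
  exact ((h1.cons y).trans (List.Perm.swap γ y d)).symm

lemma rot1 (y : Z3) {s : List Z3} (hne : s ≠ []) (h0 : gl s = 0) :
    bF * toF a₀ y s * bF⁻¹ = toF a₀ 0 (y :: s.dropLast) := by
  conv_lhs => rw [← decomp hne, h0, toF_concat, apow_zero, mul_one]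
  rw [bF_inv]
  calc bF * (toF a₀ y s.dropLast * bF) * bF
      = bF * toF a₀ y s.dropLast * (bF * bF) := by simp [mul_assoc]
    _ = bF * toF a₀ y s.dropLast := by rw [bF_sq, mul_one]
    _ = toF a₀ 0 (y :: s.dropLast) := b_mul_toF a₀ _ _

lemma cycL_rot1 (y : Z3) {s : List Z3} (hne : s ≠ []) (h0 : gl s = 0) :
    (cycL 0 (y :: s.dropLast)).Perm (cycL y s) := by
  rw [cycL, cycL, h0, add_zero, zero_add]
  rcases hdl : s.dropLast with _ | ⟨e, dl'⟩
  · exact List.Perm.refl _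
  · have hne2 : (e :: dl') ≠ [] := by simp
    rw [gl_cons _ hne2, dropLast_cons _ hne2]
    conv_rhs => rw [← decomp hne2]
    exact perm_rot y (gl (e :: dl')) (e :: dl').dropLast

lemma rot2 (q : Z3) (t : List Z3) :
    bF * toF a₀ 0 (q :: t) * bF⁻¹ = toF a₀ q (t ++ [0]) := by
  rw [b_mul_toF0, bF_inv, toF_concat, apow_zero, mul_one]

lemma cycL_rot2 (q : Z3) (t : List Z3) :
    (cycL q (t ++ [0])).Perm (cycL 0 (q :: t)) := by
  rw [cycL, cycL, gl_concat, List.dropLast_concat, add_zero, zero_add]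
  rcases t with _ | ⟨e, t'⟩
  · exact List.Perm.refl _
  · have hne2 : (e :: t') ≠ [] := by simp
    rw [gl_cons _ hne2, dropLast_cons _ hne2]
    conv_lhs => rw [← decomp hne2]
    exact (perm_rot q (gl (e :: t')) (e :: t').dropLast).symm

lemma conj_struct (hT : toAdd a₀ * toAdd a₀ = 1) :
    ∀ (N : ℕ) (h : F) (y : Z3) (s : List Z3),
    2 * (nf a₀ h).2.length + (if (nf a₀ h).1 = 0 then 0 else 1) ≤ N →
    Valid s → s ≠ [] → y + gl s ≠ 0 →
    ∃ (y' : Z3) (s' : List Z3), Valid s' ∧ s' ≠ [] ∧ y' + gl s' ≠ 0 ∧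
      (cycL y' s').Perm (cycL y s) ∧
      (h * toF a₀ y s * h⁻¹ = toF a₀ y' s' ∨
       ∃ (z : Z3) (t : List Z3), Valid t ∧ t ≠ [] ∧ gl t + y' ≠ 0 ∧ gl s' - gl t ≠ 0 ∧
         h * toF a₀ y s * h⁻¹ = toF a₀ z t * toF a₀ y' s' * (toF a₀ z t)⁻¹) := by
  intro N
  induction N with
  | zero =>
    intro h y s hm hv hne hcyc
    have h1 : (nf a₀ h).2.length = 0 := by omega
    have h2 : (nf a₀ h).1 = 0 := by
      by_contra hc
      rw [if_neg hc] at hm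
      omega
    have hnil : (nf a₀ h).2 = [] := List.length_eq_zero_iff.1 h1
    have hh := toF_nf a₀ hT h
    rw [hnil, h2, toF_nil, apow_zero] at hh
    refine ⟨y, s, hv, hne, hcyc, List.Perm.refl _, Or.inl ?_⟩
    rw [← hh]
    simp
  | succ N IH =>
    intro h y s hm hv hne hcyc
    have hh := toF_nf a₀ hT h
    have hvr : Valid (nf a₀ h).2 := nf_valid a₀ h
    by_cases hz : (nf a₀ h).1 = 0
    · rcases hr : (nf a₀ h).2 with _ | ⟨q, r₂⟩
      · -- h = 1
        rw [hr, hz, toF_nil, apow_zero] at hh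
        refine ⟨y, s, hv, hne, hcyc, List.Perm.refl _, Or.inl ?_⟩
        rw [← hh]
        simp
      · -- peel a b
        have hpeel : h = bF * (bF * h) := (bF_bF_cancel h).symm
        have hnf₂ : nf a₀ (bF * h) = lbF (nf a₀ h) := by
          rw [nf_mul]; exact Phi_b a₀ _
        have hnfh : nf a₀ h = (0, q :: r₂) := by rw [← hz, ← hr]
        have hmeas : 2 * (nf a₀ (bF * h)).2.length +
            (if (nf a₀ (bF * h)).1 = 0 then 0 else 1) ≤ N := by
          rw [hnf₂, hnfh]
          by_cases hq : q = 0
          · have hr₂ : r₂ = [] := by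
              by_contra hc
              rw [hr] at hvr
              exact (head_ne_of_valid hvr hc) hq
            subst hq; subst hr₂
            rw [lbF_pair_b]
            exact Nat.zero_le N
          · simp only [lbF, if_pos rfl, if_neg hq]
            rw [hr, hz] at hm
            simp only [List.length_cons, if_pos rfl] at hm
            show 2 * r₂.length + (if q = 0 then 0 else 1) ≤ N
            rw [if_neg hq]
            omega
        obtain ⟨y', s', hv', hne', hcyc', hperm', hcase⟩ := IH (bF * h) y s hmeas hv hne hcyc
        rcases hcase with hL | ⟨zp, t, hvt, hnet, hj1, hj2, hR⟩
        · -- LEFT form, conjugate by bF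
          by_cases hgl0 : gl s' = 0
          · -- rotation 1
            have hy'ne : y' ≠ 0 := by
              intro hc
              rw [hc, hgl0] at hcyc'
              exact hcyc' (by ring)
            refine ⟨0, y' :: s'.dropLast, ?_, by simp, ?_, ?_, Or.inl ?_⟩
            · rcases hdl : s'.dropLast with _ | ⟨e, dl'⟩
              · exact valid_single y'
              · exact valid_cons hy'ne (hdl ▸ valid_dropLast hv')
            · rcases hdl : s'.dropLast with _ | ⟨e, dl'⟩
              · simpa [gl, List.getLastD] using hy'ne
              · rw [zero_add, gl_cons _ (by simp : (e :: dl') ≠ [])]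
                have hmem : gl (e :: dl') ∈ (e :: dl') := by
                  rw [gl_eq_getLast (by simp : (e :: dl') ≠ [])]
                  exact List.getLast_mem _
                exact hv' _ (by rw [hdl]; exact hmem)
            · exact (cycL_rot1 y' hne' hgl0).trans hperm'
            · rw [hpeel, ← conj_conj, hL, rot1 a₀ y' hne' hgl0]
          · by_cases hy0 : y' = 0
            · -- rotation 2
              subst hy0
              rcases s' with _ | ⟨q', t'⟩
              · exact absurd rfl hne'
              · have hq'ne : q' ≠ 0 := by
                  rcases eq_or_ne t' [] with rfl | ht'ne
                  · simpa [gl, List.getLastD] using hgl0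
                  · exact head_ne_of_valid hv' ht'ne
                have hmemne : ∀ x ∈ t', x ≠ 0 := by
                  intro x hx
                  rcases eq_or_ne t' [] with rfl | ht'ne
                  · simp at hx
                  · rw [← decomp ht'ne] at hx
                    rcases List.mem_append.1 hx with h4 | h4
                    · apply hv'
                      rw [dropLast_cons _ ht'ne]
                      exact List.mem_cons_of_mem _ h4
                    · rcases List.mem_singleton.1 h4 with rfl
                      rw [← gl_cons q' ht'ne]
                      exact hgl0
                refine ⟨q', t' ++ [0], valid_concat hmemne 0, by simp, ?_, ?_, Or.inl ?_⟩
                · rw [gl_concat]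
                  simpa using hq'ne
                · exact (cycL_rot2 q' t').trans hperm'
                · rw [hpeel, ← conj_conj, hL, rot2]
            · -- genuine b-sandwich
              have hgl00 : gl [(0 : Z3)] = 0 := rfl
              refine ⟨y', s', hv', hne', hcyc', hperm',
                Or.inr ⟨0, [0], valid_single 0, by simp, ?_, ?_, ?_⟩⟩
              · rw [hgl00, zero_add]; exact hy0
              · rw [hgl00, sub_zero]; exact hgl0
              · rw [hpeel, ← conj_conj, hL, toF_b]
        · -- RIGHT form, conjugate by bF
          by_cases hzp : zp = 0
          · subst hzp
            rcases t with _ | ⟨d, t₂⟩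
            · exact absurd rfl hnet
            · rcases ht₂ : t₂ with _ | ⟨e, t₃⟩
              · -- p = b a^d : absorb into u'
                subst ht₂
                have hgld : gl [d] = d := by simp [gl, List.getLastD]
                rw [hgld] at hj1 hj2
                refine ⟨y' + d, s'.dropLast ++ [gl s' - d],
                  valid_concat (fun x hx => hv' x hx) _, by simp, ?_, ?_, Or.inl ?_⟩
                · rw [gl_concat]
                  intro hcon
                  apply hcyc'
                  linear_combination hcon
                · rw [cycL_aconj]
                  exact hperm'
                · rw [hpeel, ← conj_conj, hR, conj_conj, b_mul_toF0, toF_nil, aconj a₀ d y' hne']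
              · -- shorten p
                have ht₂ne : t₂ ≠ [] := by rw [ht₂]; simp
                have hglt : gl (d :: t₂) = gl t₂ := gl_cons _ ht₂ne
                rw [hglt] at hj1 hj2
                refine ⟨y', s', hv', hne', hcyc', hperm',
                  Or.inr ⟨d, t₂, valid_of_cons hvt, ht₂ne, hj1, hj2, ?_⟩⟩
                rw [hpeel, ← conj_conj, hR, conj_conj, b_mul_toF0]
          · -- grow p
            have hglt : gl (zp :: t) = gl t := gl_cons _ hnet
            refine ⟨y', s', hv', hne', hcyc', hperm',
              Or.inr ⟨0, zp :: t, valid_cons hzp hvt, by simp, ?_, ?_, ?_⟩⟩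
            · rw [hglt]; exact hj1
            · rw [hglt]; exact hj2
            · rw [hpeel, ← conj_conj, hR, conj_conj, b_mul_toF]
    · -- peel an a-power
      set zv := (nf a₀ h).1 with hzv
      have hpeel : h = apow a₀ zv * (apow a₀ (-zv) * h) := by
        rw [← mul_assoc, ← apow_add, add_neg_cancel, apow_zero, one_mul]
      have hnf₂ : nf a₀ (apow a₀ (-zv) * h) = (0, (nf a₀ h).2) := by
        rw [nf_mul, Phi_apow a₀ hT]
        show (-zv + (nf a₀ h).1, (nf a₀ h).2) = _
        rw [← hzv, neg_add_cancel]
      have hmeas : 2 * (nf a₀ (apow a₀ (-zv) * h)).2.length +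
          (if (nf a₀ (apow a₀ (-zv) * h)).1 = 0 then 0 else 1) ≤ N := by
        rw [hnf₂]
        rw [if_neg hz] at hm
        rw [if_pos (rfl : (0 : Z3) = 0)]
        show 2 * (nf a₀ h).2.length + 0 ≤ N
        omega
      obtain ⟨y', s', hv', hne', hcyc', hperm', hcase⟩ :=
        IH (apow a₀ (-zv) * h) y s hmeas hv hne hcyc
      rcases hcase with hL | ⟨zp, t, hvt, hnet, hj1, hj2, hR⟩
      · refine ⟨y' + zv, s'.dropLast ++ [gl s' - zv],
          valid_concat (fun x hx => hv' x hx) _, by simp, ?_, ?_, Or.inl ?_⟩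
        · rw [gl_concat]
          intro hcon
          apply hcyc'
          linear_combination hcon
        · rw [cycL_aconj]
          exact hperm'
        · rw [hpeel, ← conj_conj, hL, aconj a₀ _ y' hne']
      · refine ⟨y', s', hv', hne', hcyc', hperm',
          Or.inr ⟨zp + zv, t, hvt, hnet, hj1, hj2, ?_⟩⟩
        rw [hpeel, ← conj_conj, hR, conj_conj, apow_mul_toF]

end Machine5


section Machine6

variable (a₀ : Multiplicative (ZMod 3))

lemma nf_one : nf a₀ 1 = ((0 : Z3), ([] : List Z3)) := by
  unfold nf
  rw [map_one]
  rfl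

lemma conj_pow_h (h u : F) (m : ℕ) : (h * u * h⁻¹) ^ m = h * u ^ m * h⁻¹ := by
  rw [← MulAut.conj_apply, ← map_pow, MulAut.conj_apply]

lemma count_repl_ne {a b : Z3} (h : b ≠ a) (n : ℕ) : (List.replicate n b).count a = 0 := by
  induction n with
  | zero => rfl
  | succ m ih => rw [List.replicate_succ, List.count_cons, ih]; simp [h]

lemma toF_ne_one (hT : toAdd a₀ * toAdd a₀ = 1) {Y : Z3} {S : List Z3}
    (hvS : Valid S) (hneS : S ≠ []) : toF a₀ Y S ≠ 1 := by
  intro hcon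
  have h1 := nf_toF_explicit a₀ hT S Y hvS
  rw [hcon, nf_one] at h1
  exact hneS (Prod.ext_iff.mp h1.symm).2

lemma not_pow (hT : toAdd a₀ * toAdd a₀ = 1) (G : F) (k : ℕ) (hk : 2 ≤ k) (Y v : Z3)
    (S : List Z3) (hvS : Valid S) (hneS : S ≠ []) (hcycS : Y + gl S ≠ 0)
    (hcount : (cycL Y S).count v = 1) : G ^ k ≠ toF a₀ Y S := by
  intro hEq
  obtain ⟨h, u, hgu, hu⟩ := cycred a₀ hT G
  rcases hu with hu6 | ⟨y, s, hus, hvs, hnes, hcycs⟩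
  · -- torsion case
    have h6 : toF a₀ Y S ^ 6 = 1 := by
      rw [← hEq, ← pow_mul, hgu, conj_pow_h, Nat.mul_comm, pow_mul, hu6, one_pow, mul_one]
      simp
    have h7 : toF a₀ Y S ^ 6 = toF a₀ Y (repL (patL Y S) 5 ++ S) :=
      toF_pow a₀ hT hvS hneS hcycS 5
    rw [h7] at h6
    exact toF_ne_one a₀ hT (valid_pow hvS hneS hcycS 5)
      (fun hcon => hneS (List.append_eq_nil_iff.mp hcon).2) h6
  · subst hus
    obtain ⟨m, rfl⟩ : ∃ m, k = m + 2 := ⟨k - 2, by omega⟩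
    have hpow : toF a₀ y s ^ (m + 2) = toF a₀ y (repL (patL y s) (m + 1) ++ s) :=
      toF_pow a₀ hT hvs hnes hcycs (m + 1)
    have hvB : Valid (repL (patL y s) (m + 1) ++ s) := valid_pow hvs hnes hcycs (m + 1)
    have hneB : (repL (patL y s) (m + 1) ++ s) ≠ [] :=
      fun hcon => hnes (List.append_eq_nil_iff.mp hcon).2
    have hcycB : y + gl (repL (patL y s) (m + 1) ++ s) ≠ 0 := by
      rw [gl_pow hnes]
      exact hcycs
    have hsand : h * toF a₀ y (repL (patL y s) (m + 1) ++ s) * h⁻¹ = toF a₀ Y S := by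
      rw [← hpow, ← conj_pow_h, ← hgu, hEq]
    obtain ⟨y', s', hv', hne', hcyc', hperm', hcase⟩ :=
      conj_struct a₀ hT (2 * (nf a₀ h).2.length + (if (nf a₀ h).1 = 0 then 0 else 1)) h y
        (repL (patL y s) (m + 1) ++ s) le_rfl hvB hneB hcycB
    rcases hcase with hL | ⟨z, t, hvt, hnet, hj1, hj2, hR⟩
    · have heq2 : toF a₀ y' s' = toF a₀ Y S := by rw [← hL, hsand]
      obtain ⟨hy', hs'⟩ := toF_inj a₀ hT hv' hvS heq2
      have hc1 : (cycL y' s').count v = (cycL y (repL (patL y s) (m + 1) ++ s)).count v :=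
        hperm'.count_eq v
      rw [hy', hs', hcount, count_cycL_pow hnes (m + 1) v] at hc1
      rcases Nat.eq_zero_or_pos ((cycL y s).count v) with h0 | h1
      · rw [h0] at hc1; omega
      · have : (m + 1 + 1) * (cycL y s).count v ≥ 2 := by
          calc (m + 1 + 1) * (cycL y s).count v ≥ (m + 2) * 1 := by
                apply Nat.mul_le_mul
                · omega
                · exact h1
          _ ≥ 2 := by omega
        omega
    · -- sandwich case: nf of RHS ends badly
      have hnfYS : nf a₀ (toF a₀ Y S) = (Y, S) := nf_toF_explicit a₀ hT S Y hvS
      have hinv : (toF a₀ z t)⁻¹ =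
          toF a₀ (-(gl t)) ((t.dropLast.reverse.map (fun x => -x)) ++ [-z]) := by
        conv_lhs => rw [← decomp hnet]
        exact toF_inv a₀ (gl t) t.dropLast z
      have hvneg : Valid ((t.dropLast.reverse.map (fun x => -x)) ++ [-z]) := by
        apply valid_concat
        intro x hx
        obtain ⟨w, hw, rfl⟩ := List.mem_map.1 hx
        exact neg_ne_zero.2 (hvt w (List.mem_reverse.1 hw))
      have hnf1 : nf a₀ ((toF a₀ z t)⁻¹) =
          (-(gl t), (t.dropLast.reverse.map (fun x => -x)) ++ [-z]) := by
        rw [hinv]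
        exact nf_toF_explicit a₀ hT _ _ hvneg
      have hnf2 : nf a₀ (toF a₀ y' s' * (toF a₀ z t)⁻¹) =
          (y', s'.dropLast ++ (gl s' + -(gl t)) ::
            ((t.dropLast.reverse.map (fun x => -x)) ++ [-z])) := by
        rw [nf_mul, hnf1]
        exact prepend a₀ hT s' y' (-(gl t)) _ hv' hne' (by rw [← sub_eq_add_neg]; exact hj2)
      have hnf3 : nf a₀ (toF a₀ z t * (toF a₀ y' s' * (toF a₀ z t)⁻¹)) =
          (z, t.dropLast ++ (gl t + y') :: (s'.dropLast ++ (gl s' + -(gl t)) ::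
            ((t.dropLast.reverse.map (fun x => -x)) ++ [-z]))) := by
        rw [nf_mul, hnf2]
        exact prepend a₀ hT t z y' _ hvt hnet hj1
      have hR' : toF a₀ z t * (toF a₀ y' s' * (toF a₀ z t)⁻¹) = toF a₀ Y S := by
        rw [← mul_assoc, ← hR, hsand]
      rw [hR', hnfYS] at hnf3
      have hY : Y = z := congrArg Prod.fst hnf3
      have hS : S = t.dropLast ++ (gl t + y') :: (s'.dropLast ++ (gl s' + -(gl t)) ::
            ((t.dropLast.reverse.map (fun x => -x)) ++ [-z])) := congrArg Prod.snd hnf3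
      have hglS : gl S = -z := by
        rw [hS]
        rw [gl_append _ (by simp)]
        rw [gl_cons _ (by simp)]
        rw [gl_append _ (by simp)]
        rw [gl_cons _ (by simp)]
        rw [gl_concat]
      apply hcycS
      rw [hY, hglS]
      ring

end Machine6


section Machine7

variable (a₀ : Multiplicative (ZMod 3))

lemma hxinv : (apow a₀ 2 * bF)⁻¹ = bF * apow a₀ 1 := by
  rw [mul_inv_rev, bF_inv, ← apow_neg]
  have : (-2 : Z3) = 1 := by decide
  rw [this]

lemma hb_ap2 : bF * apow a₀ 2 = toF a₀ 0 [2] := by rw [← toF_nil, b_mul_toF]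

lemma hx_t0 : (apow a₀ 2 * bF) * toF a₀ 0 [2] = apow a₀ 1 := by
  rw [mul_assoc, b_mul_toF0, toF_nil, ← apow_add]
  have : (2 + 2 : Z3) = 1 := by decide
  rw [this]

lemma hx_ap1 : (apow a₀ 2 * bF) * apow a₀ 1 = toF a₀ 2 [1] := by
  rw [mul_assoc, ← toF_nil a₀ 1, b_mul_toF, apow_mul_toF, zero_add]

lemma hx_t2 (L : List Z3) : (apow a₀ 2 * bF) * toF a₀ 2 L = toF a₀ 2 (2 :: L) := by
  rw [mul_assoc, b_mul_toF, apow_mul_toF, zero_add]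

lemma hxinv_t0 (L : List Z3) :
    (apow a₀ 2 * bF)⁻¹ * toF a₀ 0 L = toF a₀ 0 (1 :: L) := by
  rw [hxinv, mul_assoc, apow_mul_toF, zero_add, b_mul_toF]

lemma gl_replicate (j : ℕ) (a : Z3) : gl (List.replicate (j + 1) a) = a := by
  rw [List.replicate_succ', gl_concat]

lemma dropLast_replicate (j : ℕ) (a : Z3) :
    (List.replicate (j + 1) a).dropLast = List.replicate j a := by
  rw [List.replicate_succ', List.dropLast_concat]

lemma TI1 : ∀ m : ℕ, ((apow a₀ 2 * bF)⁻¹) ^ m * (bF * apow a₀ 2) =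
    toF a₀ 0 (List.replicate m 1 ++ [2]) := by
  intro m
  induction m with
  | zero => rw [pow_zero, one_mul, hb_ap2]; rfl
  | succ m ih =>
    rw [pow_succ', mul_assoc, ih, hxinv_t0, List.replicate_succ, List.cons_append]

lemma TI2 : ∀ j : ℕ, (apow a₀ 2 * bF) ^ (j + 4) * (bF * apow a₀ 2) =
    (apow a₀ 2 * bF) * toF a₀ 2 (List.replicate (j + 1) 2) * (apow a₀ 2 * bF)⁻¹ := by
  intro j
  induction j with
  | zero =>
    rw [hb_ap2]
    have hXp4 : (apow a₀ 2 * bF) ^ (0 + 4) * toF a₀ 0 [2] = toF a₀ 2 [2, 2, 1] := by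
      rw [(pow_succ (apow a₀ 2 * bF) 3 :
          (apow a₀ 2 * bF) ^ (0 + 4) = (apow a₀ 2 * bF) ^ 3 * (apow a₀ 2 * bF)),
        mul_assoc, hx_t0,
        (pow_succ (apow a₀ 2 * bF) 2 :
          (apow a₀ 2 * bF) ^ 3 = (apow a₀ 2 * bF) ^ 2 * (apow a₀ 2 * bF)),
        mul_assoc, hx_ap1,
        (pow_succ (apow a₀ 2 * bF) 1 :
          (apow a₀ 2 * bF) ^ 2 = (apow a₀ 2 * bF) ^ 1 * (apow a₀ 2 * bF)),
        mul_assoc, hx_t2, pow_one, hx_t2]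
    rw [hXp4]
    rw [show List.replicate (0 + 1) (2 : Z3) = [2] from rfl]
    conv_rhs => rw [hxinv, mul_assoc, ← toF_concat, hx_t2]
    simp
  | succ j ih =>
    rw [(by omega : j + 1 + 4 = (j + 4) + 1), pow_succ',
      mul_assoc (apow a₀ 2 * bF) ((apow a₀ 2 * bF) ^ (j + 4)) (bF * apow a₀ 2), ih,
      List.replicate_succ (a := (2 : Z3)) (n := j + 1), ← hx_t2 a₀ (List.replicate (j + 1) 2),
      mul_assoc (apow a₀ 2 * bF)
        (apow a₀ 2 * bF * toF a₀ 2 (List.replicate (j + 1) 2)) ((apow a₀ 2 * bF)⁻¹)]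

end Machine7

end NPP

/-- The free product `(ℤ/3ℤ) ∗ (ℤ/2ℤ)`. -/
abbrev Z3starZ2 : Type :=
  Monoid.Coprod (Multiplicative (ZMod 3)) (Multiplicative (ZMod 2))

/-- In `F = (ℤ/3ℤ) ∗ (ℤ/2ℤ)`, with `a` the image of a generator of `ℤ/3ℤ` and `b` the
image of the generator of `ℤ/2ℤ`, for every integer `c ∉ {1, 2, 3}` the element
`(a⁻¹b)^c (ba⁻¹)` is not a proper power: there is no `g ∈ F` and no integer `n ≥ 2`
with `gⁿ = (a⁻¹b)^c(ba⁻¹)`. -/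
theorem sigma1_pow_c_sigma2_not_proper_power
    (a₀ : Multiplicative (ZMod 3)) (ha₀ : Subgroup.zpowers a₀ = ⊤)
    (c : ℤ) (hc : c ∉ ({1, 2, 3} : Set ℤ)) :
    ¬ ∃ (g : Z3starZ2) (n : ℤ), 2 ≤ n ∧
      g ^ n = ((Monoid.Coprod.inl a₀)⁻¹ *
          Monoid.Coprod.inr (Multiplicative.ofAdd (1 : ZMod 2))) ^ c *
        (Monoid.Coprod.inr (Multiplicative.ofAdd (1 : ZMod 2)) *
          (Monoid.Coprod.inl a₀)⁻¹) := by
  rintro ⟨g, n, hn, hEq⟩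
  have hall : ∀ x : Multiplicative (ZMod 3),
      x = Multiplicative.ofAdd 0 ∨ x = Multiplicative.ofAdd 1 ∨ x = Multiplicative.ofAdd 2 := by
    decide
  have hT : Multiplicative.toAdd a₀ * Multiplicative.toAdd a₀ = 1 := by
    rcases hall a₀ with h0 | h1 | h2
    · exfalso
      have ha1 : a₀ = 1 := h0.trans rfl
      have hmem : Multiplicative.ofAdd (1 : ZMod 3) ∈ Subgroup.zpowers a₀ := by
        rw [ha₀]; exact Subgroup.mem_top _
      rw [ha1, Subgroup.zpowers_one_eq_bot] at hmem
      have := Subgroup.mem_bot.mp hmem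
      exact absurd this (by decide)
    · rw [h1]; decide
    · rw [h2]; decide
  have hainv : (Monoid.Coprod.inl a₀)⁻¹ = NPP.apow a₀ 2 := by
    have hinv2 : a₀⁻¹ = a₀ ^ 2 := by
      apply inv_eq_of_mul_eq_one_right
      rw [← NPP.a0_cube a₀, (pow_succ a₀ 2 : a₀ ^ 3 = a₀ ^ 2 * a₀)]
      exact mul_comm _ _
    calc (Monoid.Coprod.inl a₀)⁻¹ = Monoid.Coprod.inl a₀⁻¹ := by rw [map_inv]
      _ = Monoid.Coprod.inl (a₀ ^ 2) := by rw [hinv2]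
      _ = NPP.apow a₀ 2 := rfl
  have hbb : Monoid.Coprod.inr (Multiplicative.ofAdd (1 : ZMod 2)) = NPP.bF := rfl
  obtain ⟨k, hkk⟩ : ∃ k : ℕ, (k : ℤ) = n := ⟨n.toNat, Int.toNat_of_nonneg (by omega)⟩
  have hk2 : 2 ≤ k := by omega
  rw [hainv, hbb, ← hkk, zpow_natCast] at hEq
  simp only [Set.mem_insert_iff, Set.mem_singleton_iff] at hc
  push_neg at hc
  obtain ⟨hc1, hc2, hc3⟩ := hc
  rcases le_or_gt c 0 with hcle | hcgt
  · obtain ⟨m, hm⟩ : ∃ m : ℕ, (m : ℤ) = -c := ⟨(-c).toNat, Int.toNat_of_nonneg (by omega)⟩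
    have hzp : (NPP.apow a₀ 2 * NPP.bF) ^ c = ((NPP.apow a₀ 2 * NPP.bF)⁻¹) ^ m := by
      rw [show c = -(m : ℤ) from by omega, zpow_neg, zpow_natCast, inv_pow]
    rw [hzp, NPP.TI1 a₀ m] at hEq
    refine NPP.not_pow a₀ hT g k hk2 0 2 _ ?_ ?_ ?_ ?_ hEq
    · exact NPP.valid_concat (fun x hx => by rw [List.eq_of_mem_replicate hx]; decide) 2
    · simp
    · rw [NPP.gl_concat]; decide
    · have hcy : NPP.cycL 0 (List.replicate m 1 ++ [2]) = (0 + 2) :: List.replicate m 1 := by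
        rw [NPP.cycL, NPP.gl_concat, List.dropLast_concat]
      rw [hcy, List.count_cons, NPP.count_repl_ne (by decide : (1 : NPP.Z3) ≠ 2) m]
      decide
  · obtain ⟨j, hj⟩ : ∃ j : ℕ, c = (j : ℤ) + 4 := ⟨(c - 4).toNat, by omega⟩
    have hcast : ((j : ℤ) + 4) = ((j + 4 : ℕ) : ℤ) := by push_cast; ring
    have hzp : (NPP.apow a₀ 2 * NPP.bF) ^ c = (NPP.apow a₀ 2 * NPP.bF) ^ (j + 4) := by
      rw [hj, hcast, zpow_natCast]
    rw [hzp, NPP.TI2 a₀ j] at hEq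
    have hEq2 : ((NPP.apow a₀ 2 * NPP.bF)⁻¹ * g * ((NPP.apow a₀ 2 * NPP.bF)⁻¹)⁻¹) ^ k =
        NPP.toF a₀ 2 (List.replicate (j + 1) 2) := by
      rw [NPP.conj_pow_h, hEq, inv_inv]
      group
    refine NPP.not_pow a₀ hT _ k hk2 2 1 _ ?_ ?_ ?_ ?_ hEq2
    · intro x hx
      have hx2 : x ∈ List.replicate (j + 1) (2 : NPP.Z3) :=
        List.Sublist.mem hx (List.dropLast_sublist _)
      rw [List.eq_of_mem_replicate hx2]
      decide
    · simp
    · rw [NPP.gl_replicate]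
      decide
    · have hcy : NPP.cycL 2 (List.replicate (j + 1) 2) = (2 + 2) :: List.replicate j 2 := by
        rw [NPP.cycL, NPP.gl_replicate, NPP.dropLast_replicate]
      rw [hcy, List.count_cons, NPP.count_repl_ne (by decide : (2 : NPP.Z3) ≠ 1) j]
      decide
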